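/- Let G be a finite simple graph and V₁, V₂ ⊆ V(G) with V₁ ∪ V₂ = V(G) and V₁ ∩ V₂ = {v, w} where {v,w} ∈ E(G), such that every edge of G has both endpoints in V₁ or both in V₂ (i.e., G is the gluing of the induced subgraphs G₁ on V₁ and G₂ on V₂ along the edge {v,w}, which belongs to both). Then an edge weighting r ∈ [0,1]^{E(G)} lies in the classical polytope C_G if and only if its restriction to E(G₁) lies in C_{G₁} and its restriction to E(G₂) lies in C_{G₂}. -/

import Mathlib

open SimpleGraph
open scoped Classical

variable {V : Type*}

/-- The element of `G.edgeSet` corresponding to an adjacent pair of vertices. -/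
def edgeMk (G : SimpleGraph V) {v w : V} (h : G.Adj v w) : G.edgeSet :=
  ⟨s(v, w), (SimpleGraph.mem_edgeSet G).mpr h⟩

/-- `r` is a realizable edge `{0,1}`-labelling of `G`, viewed as a real vector:
it is the equality labelling of some vertex labelling. -/
def RealizablePoint (G : SimpleGraph V) (r : G.edgeSet → ℝ) : Prop :=
  ∃ (Λ : Type) (lam : V → Λ), ∀ v w (h : G.Adj v w),
    r (edgeMk G h) = if lam v = lam w then 1 else 0

/-- The classical polytope `C_G`: the convex hull of the realizable edge `{0,1}`-labellings. -/
def classicalPolytope (G : SimpleGraph V) : Set (G.edgeSet → ℝ) :=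
  convexHull ℝ {r | RealizablePoint G r}

/-- The (induced) subgraph of `G` on a set `s` of vertices, kept on the same vertex type:
its edges are exactly the edges of `G` with both endpoints in `s`. -/
def restrictTo (G : SimpleGraph V) (s : Set V) : SimpleGraph V where
  Adj v w := G.Adj v w ∧ v ∈ s ∧ w ∈ s
  symm := ⟨fun v w (h : G.Adj v w ∧ v ∈ s ∧ w ∈ s) =>
    (show G.Adj w v ∧ w ∈ s ∧ v ∈ s from ⟨h.1.symm, h.2.2, h.2.1⟩)⟩
  loopless := ⟨fun v (h : G.Adj v v ∧ v ∈ s ∧ v ∈ s) => G.loopless.irrefl v h.1⟩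

theorem restrictTo_le (G : SimpleGraph V) (s : Set V) : restrictTo G s ≤ G := by
  intro v w h; exact (show G.Adj v w ∧ v ∈ s ∧ w ∈ s from h).1

/-- Restriction of an edge weighting along a subgraph inclusion. -/
def restrictWeights {G G' : SimpleGraph V} (h : G' ≤ G) (r : G.edgeSet → ℝ) :
    G'.edgeSet → ℝ :=
  fun e => r ⟨e.1, SimpleGraph.edgeSet_subset_edgeSet.mpr h e.2⟩

/-! ### Auxiliary lemmas -/

lemma restrictTo_adj (G : SimpleGraph V) (s : Set V) (a b : V) :
    (restrictTo G s).Adj a b ↔ G.Adj a b ∧ a ∈ s ∧ b ∈ s := Iff.rfl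

lemma realizable_restrict {G G' : SimpleGraph V} (hle : G' ≤ G) {x : G.edgeSet → ℝ}
    (hx : RealizablePoint G x) : RealizablePoint G' (restrictWeights hle x) := by
  obtain ⟨Λ, lam, h⟩ := hx
  exact ⟨Λ, lam, fun a b hab => h a b (hle hab)⟩

lemma restrict_mem_polytope {G G' : SimpleGraph V} (hle : G' ≤ G) {r : G.edgeSet → ℝ}
    (hr : r ∈ classicalPolytope G) :
    restrictWeights hle r ∈ classicalPolytope G' := by
  classical
  set f : (G.edgeSet → ℝ) →ₗ[ℝ] (G'.edgeSet → ℝ) :=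
    LinearMap.funLeft ℝ ℝ (Set.inclusion (SimpleGraph.edgeSet_subset_edgeSet.mpr hle)) with hf
  have himg : restrictWeights hle r = f r := rfl
  rw [himg]
  have : f r ∈ f '' (convexHull ℝ {x | RealizablePoint G x}) := Set.mem_image_of_mem _ hr
  rw [f.image_convexHull] at this
  refine convexHull_mono ?_ this
  rintro y ⟨x, hx, rfl⟩
  exact realizable_restrict hle hx

/-- The gluing of edge weightings on two subgraphs covering the edges of `G`. -/
noncomputable def glue (G G₁ G₂ : SimpleGraph V)
    (hm : ∀ e : G.edgeSet, (e : Sym2 V) ∉ G₁.edgeSet → (e : Sym2 V) ∈ G₂.edgeSet)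
    (x₁ : G₁.edgeSet → ℝ) (x₂ : G₂.edgeSet → ℝ) : G.edgeSet → ℝ :=
  fun e => if h : (e : Sym2 V) ∈ G₁.edgeSet then x₁ ⟨e, h⟩ else x₂ ⟨e, hm e h⟩

/-- The key algebraic identity for the product coupling. -/
lemma key {ι₁ : Type*} {ι₂ : Type*} (s₁ : Finset ι₁) (s₂ : Finset ι₂)
    (lam : ι₁ → ℝ) (mu : ι₂ → ℝ) (a : ι₁ → ℝ) (b : ι₂ → ℝ) (t : ℝ) (c : ι₁ → ℝ)
    (hl : ∀ i ∈ s₁, 0 ≤ lam i)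
    (ha : ∀ i ∈ s₁, a i = 0 ∨ a i = 1) (hb : ∀ j ∈ s₂, b j = 0 ∨ b j = 1)
    (h1 : ∑ i ∈ s₁, (if a i = 1 then lam i else 0) = t)
    (h0 : ∑ i ∈ s₁, (if a i = 1 then 0 else lam i) = 1 - t)
    (h1' : ∑ j ∈ s₂, (if b j = 1 then mu j else 0) = t)
    (h0' : ∑ j ∈ s₂, (if b j = 1 then 0 else mu j) = 1 - t) :
    ∑ i ∈ s₁, ∑ j ∈ s₂,
        (if a i = b j then lam i * mu j / (if a i = 1 then t else 1 - t) * c i else 0)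
      = ∑ i ∈ s₁, lam i * c i := by
  apply Finset.sum_congr rfl
  intro i hi
  have hD : (if a i = 1 then t else 1 - t) = ∑ j ∈ s₂, (if a i = b j then mu j else 0) := by
    rcases ha i hi with h | h
    · rw [if_neg (by rw [h]; norm_num), ← h0']
      apply Finset.sum_congr rfl
      intro j hj
      rcases hb j hj with hbj | hbj <;> simp [h, hbj]
    · rw [if_pos h, ← h1']
      apply Finset.sum_congr rfl
      intro j hj
      rcases hb j hj with hbj | hbj <;> simp [h, hbj]
  have hsplit : ∀ j, (if a i = b j then lam i * mu j / (if a i = 1 then t else 1 - t) * c i else 0)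
      = (lam i * c i / (if a i = 1 then t else 1 - t)) * (if a i = b j then mu j else 0) := by
    intro j
    split <;> ring
  rw [Finset.sum_congr rfl (fun j _ => hsplit j), ← Finset.mul_sum, ← hD]
  rcases eq_or_ne (if a i = 1 then t else 1 - t) 0 with h0D | hne
  · have hle0 : lam i ≤ (if a i = 1 then t else 1 - t) := by
      rcases ha i hi with h | h
      · rw [if_neg (by rw [h]; norm_num), ← h0]
        calc lam i = (if a i = 1 then 0 else lam i) := by rw [if_neg (by rw [h]; norm_num)]
          _ ≤ ∑ i' ∈ s₁, (if a i' = 1 then 0 else lam i') := by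
              refine Finset.single_le_sum (f := fun i' => if a i' = 1 then 0 else lam i')
                (fun i' hi' => ?_) hi
              split
              · exact le_refl 0
              · exact hl i' hi'
      · rw [if_pos h, ← h1]
        calc lam i = (if a i = 1 then lam i else 0) := by rw [if_pos h]
          _ ≤ ∑ i' ∈ s₁, (if a i' = 1 then lam i' else 0) := by
              refine Finset.single_le_sum (f := fun i' => if a i' = 1 then lam i' else 0)
                (fun i' hi' => ?_) hi
              split
              · exact hl i' hi'
              · exact le_refl 0
    have hlam0 : lam i = 0 := le_antisymm (h0D ▸ hle0) (hl i hi)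
    simp [hlam0]
  · rw [div_mul_cancel₀ _ hne]

/-- Mirrored version of `key`. -/
lemma key' {ι₁ : Type*} {ι₂ : Type*} (s₁ : Finset ι₁) (s₂ : Finset ι₂)
    (lam : ι₁ → ℝ) (mu : ι₂ → ℝ) (a : ι₁ → ℝ) (b : ι₂ → ℝ) (t : ℝ) (c : ι₂ → ℝ)
    (hm : ∀ j ∈ s₂, 0 ≤ mu j)
    (ha : ∀ i ∈ s₁, a i = 0 ∨ a i = 1) (hb : ∀ j ∈ s₂, b j = 0 ∨ b j = 1)
    (h1 : ∑ i ∈ s₁, (if a i = 1 then lam i else 0) = t)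
    (h0 : ∑ i ∈ s₁, (if a i = 1 then 0 else lam i) = 1 - t)
    (h1' : ∑ j ∈ s₂, (if b j = 1 then mu j else 0) = t)
    (h0' : ∑ j ∈ s₂, (if b j = 1 then 0 else mu j) = 1 - t) :
    ∑ i ∈ s₁, ∑ j ∈ s₂,
        (if a i = b j then lam i * mu j / (if a i = 1 then t else 1 - t) * c j else 0)
      = ∑ j ∈ s₂, mu j * c j := by
  rw [Finset.sum_comm]
  have hstep : ∀ j ∈ s₂, ∀ i ∈ s₁,
      (if a i = b j then lam i * mu j / (if a i = 1 then t else 1 - t) * c j else 0)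
        = (if b j = a i then mu j * lam i / (if b j = 1 then t else 1 - t) * c j else 0) := by
    intro j hj i hi
    by_cases hab : a i = b j
    · rw [if_pos hab, if_pos hab.symm]
      simp only [hab]
      ring
    · rw [if_neg hab, if_neg (fun h => hab h.symm)]
  rw [Finset.sum_congr rfl (fun j hj => Finset.sum_congr rfl (fun i hi => hstep j hj i hi))]
  exact key s₂ s₁ mu lam b a t c hm hb ha h1' h0' h1 h0

/-- Gluing of realizable points (whose labellings have matching equality-pattern at `{v,w}`)
is realizable. -/
lemma glue_realizable (G : SimpleGraph V) (V₁ V₂ : Set V) (v w : V)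
    (hmeet : V₁ ∩ V₂ = {v, w}) (hv1 : v ∈ V₁) (hw1 : w ∈ V₁)
    (hm : ∀ e : G.edgeSet,
      (e : Sym2 V) ∉ (restrictTo G V₁).edgeSet → (e : Sym2 V) ∈ (restrictTo G V₂).edgeSet)
    {x₁ : (restrictTo G V₁).edgeSet → ℝ} {x₂ : (restrictTo G V₂).edgeSet → ℝ}
    {Λ₁ Λ₂ : Type} {lam₁ : V → Λ₁} {lam₂ : V → Λ₂}
    (hx₁ : ∀ a b (h : (restrictTo G V₁).Adj a b),
      x₁ (edgeMk _ h) = if lam₁ a = lam₁ b then 1 else 0)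
    (hx₂ : ∀ a b (h : (restrictTo G V₂).Adj a b),
      x₂ (edgeMk _ h) = if lam₂ a = lam₂ b then 1 else 0)
    (hc : lam₁ v = lam₁ w ↔ lam₂ v = lam₂ w) :
    RealizablePoint G (glue G _ _ hm x₁ x₂) := by
  classical
  set L : V → Λ₁ ⊕ Λ₂ := fun u =>
    if u ∈ V₁ then Sum.inl (lam₁ u)
    else if lam₂ u = lam₂ v then Sum.inl (lam₁ v)
    else if lam₂ u = lam₂ w then Sum.inl (lam₁ w)
    else Sum.inr (lam₂ u) with hL
  have hL1 : ∀ u ∈ V₁, L u = Sum.inl (lam₁ u) := by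
    intro u hu; simp [hL, hu]
  have hL2 : ∀ u ∈ V₂, L u =
      (if lam₂ u = lam₂ v then Sum.inl (lam₁ v)
       else if lam₂ u = lam₂ w then Sum.inl (lam₁ w)
       else Sum.inr (lam₂ u)) := by
    intro u hu
    by_cases h1 : u ∈ V₁
    · have huv : u ∈ ({v, w} : Set V) := hmeet ▸ Set.mem_inter h1 hu
      rcases huv with h | h
    -- u = v
      · subst h
        rw [hL1 u h1, if_pos rfl]
      · subst h
        rw [hL1 u h1]
        by_cases hwv : lam₂ u = lam₂ v
        · rw [if_pos hwv]
          have : lam₁ v = lam₁ u := hc.mpr hwv.symm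
          rw [this]
        · rw [if_neg hwv, if_pos rfl]
    · simp [hL, h1]
  have claim2 : ∀ a ∈ V₂, ∀ b ∈ V₂, (L a = L b ↔ lam₂ a = lam₂ b) := by
    intro a ha b hb
    rw [hL2 a ha, hL2 b hb]
    split_ifs with g1 g2 g3 g4 g5 g6 g7 g8 <;>
      simp_all [Sum.inl.injEq, Sum.inr.injEq, eq_comm]
  refine ⟨Λ₁ ⊕ Λ₂, L, fun a b h => ?_⟩
  by_cases h₁ : s(a, b) ∈ (restrictTo G V₁).edgeSet
  · have hadj₁ : (restrictTo G V₁).Adj a b := (SimpleGraph.mem_edgeSet _).mp h₁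
    have hval : glue G _ _ hm x₁ x₂ (edgeMk G h) = x₁ (edgeMk _ hadj₁) := by
      simp only [glue]
      exact dif_pos h₁
    rw [hval, hx₁ a b hadj₁, hL1 a ((restrictTo_adj G V₁ a b).mp hadj₁).2.1, hL1 b ((restrictTo_adj G V₁ a b).mp hadj₁).2.2]
    simp
  · have hadj₂ : (restrictTo G V₂).Adj a b := (SimpleGraph.mem_edgeSet _).mp (hm (edgeMk G h) h₁)
    have hval : glue G _ _ hm x₁ x₂ (edgeMk G h) = x₂ (edgeMk _ hadj₂) := by
      simp only [glue]
      exact dif_neg h₁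
    rw [hval, hx₂ a b hadj₂]
    simp only [claim2 a ((restrictTo_adj G V₂ a b).mp hadj₂).2.1 b ((restrictTo_adj G V₂ a b).mp hadj₂).2.2]

/-- If `G` is the gluing of its induced subgraphs `G₁` on `V₁` and `G₂` on `V₂` along an
edge `{v,w}` (i.e. `V₁ ∩ V₂ = {v, w}`, `{v,w} ∈ E(G)`, and every edge lies within `V₁` or
within `V₂`), then an edge weighting `r ∈ [0,1]^{E(G)}` lies in `C_G` iff its restriction
to `E(G₁)` lies in `C_{G₁}` and its restriction to `E(G₂)` lies in `C_{G₂}`. -/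
theorem stmt6 [Fintype V] (G : SimpleGraph V) (V₁ V₂ : Set V) (v w : V)
    (hcover : V₁ ∪ V₂ = Set.univ) (hmeet : V₁ ∩ V₂ = {v, w}) (hvw : G.Adj v w)
    (hedges : ∀ x y, G.Adj x y → (x ∈ V₁ ∧ y ∈ V₁) ∨ (x ∈ V₂ ∧ y ∈ V₂))
    (r : G.edgeSet → ℝ) (hr01 : ∀ e, r e ∈ Set.Icc (0 : ℝ) 1) :
    r ∈ classicalPolytope G ↔
      (restrictWeights (restrictTo_le G V₁) r ∈ classicalPolytope (restrictTo G V₁) ∧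
       restrictWeights (restrictTo_le G V₂) r ∈ classicalPolytope (restrictTo G V₂)) := by
  classical
  constructor
  · intro hr
    exact ⟨restrict_mem_polytope _ hr, restrict_mem_polytope _ hr⟩
  rintro ⟨hr₁, hr₂⟩
  -- basic membership facts
  have hv12 : v ∈ V₁ ∩ V₂ := by rw [hmeet]; exact Set.mem_insert _ _
  have hw12 : w ∈ V₁ ∩ V₂ := by rw [hmeet]; exact Set.mem_insert_iff.mpr (Or.inr rfl)
  have hv1 : v ∈ V₁ := hv12.1
  have hw1 : w ∈ V₁ := hw12.1
  have hv2 : v ∈ V₂ := hv12.2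
  have hw2 : w ∈ V₂ := hw12.2
  have hm : ∀ e : G.edgeSet,
      (e : Sym2 V) ∉ (restrictTo G V₁).edgeSet → (e : Sym2 V) ∈ (restrictTo G V₂).edgeSet := by
    rintro ⟨e, he⟩
    induction e using Sym2.ind with
    | _ a b =>
      intro h1
      have hab : G.Adj a b := (SimpleGraph.mem_edgeSet _).mp he
      rcases hedges a b hab with ⟨ha, hb⟩ | ⟨ha, hb⟩
      · exact absurd ((SimpleGraph.mem_edgeSet _).mpr ((restrictTo_adj G V₁ a b).mpr ⟨hab, ha, hb⟩)) h1
      · exact (SimpleGraph.mem_edgeSet _).mpr ((restrictTo_adj G V₂ a b).mpr ⟨hab, ha, hb⟩)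
  set t := r (edgeMk G hvw) with ht
  have ht0 : 0 ≤ t := (hr01 _).1
  have ht1 : t ≤ 1 := (hr01 _).2
  have adj₁ : (restrictTo G V₁).Adj v w := (restrictTo_adj G V₁ v w).mpr ⟨hvw, hv1, hw1⟩
  have adj₂ : (restrictTo G V₂).Adj v w := (restrictTo_adj G V₂ v w).mpr ⟨hvw, hv2, hw2⟩
  -- extract convex combination data
  rw [classicalPolytope, convexHull_eq] at hr₁ hr₂
  obtain ⟨ι₁, s₁, lamw, x, hlw, hsum₁, hxR, hcm₁⟩ := hr₁
  obtain ⟨ι₂, s₂, muw, y, hmw, hsum₂, hyR, hcm₂⟩ := hr₂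
  rw [Finset.centerMass_eq_of_sum_1 _ _ hsum₁] at hcm₁
  rw [Finset.centerMass_eq_of_sum_1 _ _ hsum₂] at hcm₂
  have hpt₁ : ∀ e, ∑ i ∈ s₁, lamw i * x i e = restrictWeights (restrictTo_le G V₁) r e := by
    intro e
    have := congrFun hcm₁ e
    simpa [Finset.sum_apply, Pi.smul_apply, smul_eq_mul] using this
  have hpt₂ : ∀ e, ∑ j ∈ s₂, muw j * y j e = restrictWeights (restrictTo_le G V₂) r e := by
    intro e
    have := congrFun hcm₂ e
    simpa [Finset.sum_apply, Pi.smul_apply, smul_eq_mul] using this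
  set a : ι₁ → ℝ := fun i => x i (edgeMk _ adj₁) with haa
  set b : ι₂ → ℝ := fun j => y j (edgeMk _ adj₂) with hbb
  have ha : ∀ i ∈ s₁, a i = 0 ∨ a i = 1 := by
    intro i hi
    obtain ⟨Λ, lam, hlam⟩ := hxR i hi
    have := hlam v w adj₁
    rw [haa]
    simp only [this]
    split
    · exact Or.inr rfl
    · exact Or.inl rfl
  have hb : ∀ j ∈ s₂, b j = 0 ∨ b j = 1 := by
    intro j hj
    obtain ⟨Λ, lam, hlam⟩ := hyR j hj
    have := hlam v w adj₂
    rw [hbb]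
    simp only [this]
    split
    · exact Or.inr rfl
    · exact Or.inl rfl
  have hrt₁ : restrictWeights (restrictTo_le G V₁) r (edgeMk _ adj₁) = t := rfl
  have hrt₂ : restrictWeights (restrictTo_le G V₂) r (edgeMk _ adj₂) = t := rfl
  have h1 : ∑ i ∈ s₁, (if a i = 1 then lamw i else 0) = t := by
    have heq : ∀ i ∈ s₁, (if a i = 1 then lamw i else 0) = lamw i * a i := by
      intro i hi
      rcases ha i hi with h | h <;> rw [h] <;> norm_num
    rw [Finset.sum_congr rfl heq]
    rw [hpt₁ (edgeMk _ adj₁), hrt₁]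
  have h0 : ∑ i ∈ s₁, (if a i = 1 then 0 else lamw i) = 1 - t := by
    have heq : ∀ i ∈ s₁, (if a i = 1 then 0 else lamw i)
        = lamw i - (if a i = 1 then lamw i else 0) := by
      intro i hi
      split <;> ring
    rw [Finset.sum_congr rfl heq, Finset.sum_sub_distrib, hsum₁, h1]
  have h1' : ∑ j ∈ s₂, (if b j = 1 then muw j else 0) = t := by
    have heq : ∀ j ∈ s₂, (if b j = 1 then muw j else 0) = muw j * b j := by
      intro j hj
      rcases hb j hj with h | h <;> rw [h] <;> norm_num
    rw [Finset.sum_congr rfl heq]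
    rw [hpt₂ (edgeMk _ adj₂), hrt₂]
  have h0' : ∑ j ∈ s₂, (if b j = 1 then 0 else muw j) = 1 - t := by
    have heq : ∀ j ∈ s₂, (if b j = 1 then 0 else muw j)
        = muw j - (if b j = 1 then muw j else 0) := by
      intro j hj
      split <;> ring
    rw [Finset.sum_congr rfl heq, Finset.sum_sub_distrib, hsum₂, h1']
  -- the coupling
  set T : Finset (ι₁ × ι₂) := (s₁ ×ˢ s₂).filter (fun p => a p.1 = b p.2) with hT
  set ν : ι₁ × ι₂ → ℝ := fun p => lamw p.1 * muw p.2 / (if a p.1 = 1 then t else 1 - t) with hν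
  set z : ι₁ × ι₂ → (G.edgeSet → ℝ) := fun p => glue G _ _ hm (x p.1) (y p.2) with hz
  have hνsum : ∑ p ∈ T, ν p = 1 := by
    rw [hT, Finset.sum_filter, Finset.sum_product]
    have := key s₁ s₂ lamw muw a b t (fun _ => 1) hlw ha hb h1 h0 h1' h0'
    simp only [mul_one] at this
    rw [hν]
    simpa [this] using hsum₁
  have hνnn : ∀ p ∈ T, 0 ≤ ν p := by
    intro p hp
    rw [hT, Finset.mem_filter, Finset.mem_product] at hp
    refine div_nonneg (mul_nonneg (hlw _ hp.1.1) (hmw _ hp.1.2)) ?_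
    split
    · exact ht0
    · linarith
  have hzR : ∀ p ∈ T, z p ∈ {r' | RealizablePoint G r'} := by
    intro p hp
    rw [hT, Finset.mem_filter, Finset.mem_product] at hp
    obtain ⟨⟨hp1, hp2⟩, hpe⟩ := hp
    obtain ⟨Λ₁, lam₁, hlam₁⟩ := hxR p.1 hp1
    obtain ⟨Λ₂, lam₂, hlam₂⟩ := hyR p.2 hp2
    have hc : lam₁ v = lam₁ w ↔ lam₂ v = lam₂ w := by
      have e1 : a p.1 = if lam₁ v = lam₁ w then 1 else 0 := hlam₁ v w adj₁
      have e2 : b p.2 = if lam₂ v = lam₂ w then 1 else 0 := hlam₂ v w adj₂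
      rw [e1, e2] at hpe
      by_cases hA : lam₁ v = lam₁ w <;> by_cases hB : lam₂ v = lam₂ w <;>
        simp [hA, hB] at hpe ⊢
    exact glue_realizable G V₁ V₂ v w hmeet hv1 hw1 hm hlam₁ hlam₂ hc
  have hfinal : T.centerMass ν z = r := by
    rw [Finset.centerMass_eq_of_sum_1 _ _ hνsum]
    funext e
    rw [Finset.sum_apply]
    simp only [Pi.smul_apply, smul_eq_mul]
    rw [hT, Finset.sum_filter, Finset.sum_product]
    by_cases h₁ : (e : Sym2 V) ∈ (restrictTo G V₁).edgeSet
    · have hg : ∀ i j, z (i, j) e = x i ⟨e, h₁⟩ := by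
        intro i j
        rw [hz]
        simp only [glue]
        rw [dif_pos h₁]
      have hcong : ∀ i ∈ s₁, ∀ j ∈ s₂,
          (if a i = b j then ν (i, j) * z (i, j) e else 0)
            = (if a i = b j then lamw i * muw j / (if a i = 1 then t else 1 - t) * x i ⟨e, h₁⟩
               else 0) := by
        intro i _ j _
        rw [hg i j, hν]
      rw [Finset.sum_congr rfl (fun i hi => Finset.sum_congr rfl (fun j hj => hcong i hi j hj))]
      rw [key s₁ s₂ lamw muw a b t (fun i => x i ⟨e, h₁⟩) hlw ha hb h1 h0 h1' h0']
      have := hpt₁ ⟨e, h₁⟩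
      rw [this]
      have : restrictWeights (restrictTo_le G V₁) r ⟨e, h₁⟩ = r e := rfl
      rw [this]
    · have h₂ : (e : Sym2 V) ∈ (restrictTo G V₂).edgeSet := hm e h₁
      have hg : ∀ i j, z (i, j) e = y j ⟨e, h₂⟩ := by
        intro i j
        rw [hz]
        simp only [glue]
        rw [dif_neg h₁]
      have hcong : ∀ i ∈ s₁, ∀ j ∈ s₂,
          (if a i = b j then ν (i, j) * z (i, j) e else 0)
            = (if a i = b j then lamw i * muw j / (if a i = 1 then t else 1 - t) * y j ⟨e, h₂⟩
               else 0) := by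
        intro i _ j _
        rw [hg i j, hν]
      rw [Finset.sum_congr rfl (fun i hi => Finset.sum_congr rfl (fun j hj => hcong i hi j hj))]
      rw [key' s₁ s₂ lamw muw a b t (fun j => y j ⟨e, h₂⟩) hmw ha hb h1 h0 h1' h0']
      have := hpt₂ ⟨e, h₂⟩
      rw [this]
      have : restrictWeights (restrictTo_le G V₂) r ⟨e, h₂⟩ = r e := rfl
      rw [this]
  rw [← hfinal]
  exact T.centerMass_mem_convexHull hνnn (by rw [hνsum]; norm_num) hzR
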